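/- Let A and B be n×n symmetric positive semidefinite matrices with B ⪯ A in the Loewner order (i.e., A − B positive semidefinite). Then 0 ≤ log det(I + A) − log det(I + B) ≤ log det(I + A − B). -/

import Mathlib

open Matrix
open scoped MatrixOrder

section aux

variable {n : ℕ}

/-- If `P` is PSD then `1 ≤ det (1 + P)`. -/
lemma aux_one_le_det {P : Matrix (Fin n) (Fin n) ℝ} (hP : P.PosSemidef) :
    1 ≤ (1 + P).det := by
  set U : Matrix (Fin n) (Fin n) ℝ := (hP.1.eigenvectorUnitary : Matrix (Fin n) (Fin n) ℝ)
  set D : Matrix (Fin n) (Fin n) ℝ := diagonal (RCLike.ofReal ∘ hP.1.eigenvalues)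
  have hUU : star U * U = 1 := (Matrix.mem_unitaryGroup_iff').mp hP.1.eigenvectorUnitary.2
  have hUU' : U * star U = 1 := (Matrix.mem_unitaryGroup_iff).mp hP.1.eigenvectorUnitary.2
  have hspec : P = U * D * star U := hP.1.spectral_theorem
  have h1 : 1 + P = U * (1 + D) * star U := by
    rw [mul_add, add_mul, mul_one, hUU', hspec]
  have hdet : (1 + P).det = (1 + D).det := by
    rw [h1, Matrix.det_mul, Matrix.det_mul, mul_comm, ← mul_assoc, ← Matrix.det_mul, hUU,
      Matrix.det_one, one_mul]
  have hdiag : (1 : Matrix (Fin n) (Fin n) ℝ) + D =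
      diagonal (fun i => 1 + hP.1.eigenvalues i) := by
    rw [← Matrix.diagonal_one, Matrix.diagonal_add]
    congr 1
  rw [hdet, hdiag, Matrix.det_diagonal]
  have := Finset.prod_le_prod (s := Finset.univ) (f := fun _ : Fin n => (1 : ℝ))
    (g := fun i => 1 + hP.1.eigenvalues i) (fun i _ => zero_le_one)
    (fun i _ => by simpa using hP.eigenvalues_nonneg i)
  simpa using this

/-- Monotonicity of determinant with respect to the Loewner order. -/
lemma aux_det_le_det {X Y : Matrix (Fin n) (Fin n) ℝ} (hX : X.PosDef)
    (hXY : (Y - X).PosSemidef) : X.det ≤ Y.det := by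
  set S := CFC.sqrt X with hSdef
  have hS2 : S * S = X := CFC.sqrt_mul_sqrt_self X hX.posSemidef.nonneg
  have hSH : S.IsHermitian := (CFC.sqrt_nonneg X).posSemidef.1
  have hdX : 0 < X.det := hX.det_pos
  have hdS : IsUnit S.det := by
    refine isUnit_iff_ne_zero.mpr fun h => ?_
    rw [← hS2, Matrix.det_mul, h, mul_zero] at hdX
    exact lt_irrefl _ hdX
  have hSinv : S * S⁻¹ = 1 := Matrix.mul_nonsing_inv S hdS
  have hSinv' : S⁻¹ * S = 1 := Matrix.nonsing_inv_mul S hdS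
  set Q := S⁻¹ * (Y - X) * S⁻¹ with hQdef
  have hQ : Q.PosSemidef := by
    have := hXY.mul_mul_conjTranspose_same S⁻¹
    rwa [Matrix.conjTranspose_nonsing_inv, hSH.eq] at this
  have hY : Y = S * (1 + Q) * S := by
    rw [hQdef, mul_add, mul_one, add_mul, hS2, ← mul_assoc, ← mul_assoc, hSinv, one_mul,
      mul_assoc, hSinv', mul_one]
    abel
  have hYdet : Y.det = X.det * (1 + Q).det := by
    calc Y.det = S.det * (1 + Q).det * S.det := by
          rw [hY, Matrix.det_mul, Matrix.det_mul]
      _ = X.det * (1 + Q).det := by rw [← hS2, Matrix.det_mul]; ring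
  rw [hYdet]
  exact le_mul_of_one_le_right hdX.le (aux_one_le_det hQ)

/-- If `M` is PD and `M - 1` is PSD then `1 - M⁻¹` is PSD. -/
lemma aux_one_sub_inv {M : Matrix (Fin n) (Fin n) ℝ} (hM : M.PosDef)
    (hM1 : (M - 1).PosSemidef) : ((1 : Matrix (Fin n) (Fin n) ℝ) - M⁻¹).PosSemidef := by
  set S := CFC.sqrt M with hSdef
  have hS2 : S * S = M := CFC.sqrt_mul_sqrt_self M hM.posSemidef.nonneg
  have hSH : S.IsHermitian := (CFC.sqrt_nonneg M).posSemidef.1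
  have hdM : 0 < M.det := hM.det_pos
  have hdS : IsUnit S.det := by
    refine isUnit_iff_ne_zero.mpr fun h => ?_
    rw [← hS2, Matrix.det_mul, h, mul_zero] at hdM
    exact lt_irrefl _ hdM
  have hSinv : S * S⁻¹ = 1 := Matrix.mul_nonsing_inv S hdS
  have hSinv' : S⁻¹ * S = 1 := Matrix.nonsing_inv_mul S hdS
  have key : (1 : Matrix (Fin n) (Fin n) ℝ) - M⁻¹ = S⁻¹ * (M - 1) * S⁻¹ := by
    rw [mul_sub, sub_mul, mul_one, ← hS2, Matrix.mul_inv_rev, ← mul_assoc S⁻¹ S S,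
      hSinv', one_mul, hSinv]
  rw [key]
  have := hM1.mul_mul_conjTranspose_same S⁻¹
  rwa [Matrix.conjTranspose_nonsing_inv, hSH.eq] at this

/-- Subadditivity: `det (1 + B + C) ≤ det (1 + B) * det (1 + C)` for PSD `B`, `C`. -/
lemma aux_det_subadd {B C : Matrix (Fin n) (Fin n) ℝ} (hB : B.PosSemidef)
    (hC : C.PosSemidef) : (1 + B + C).det ≤ (1 + B).det * (1 + C).det := by
  set M : Matrix (Fin n) (Fin n) ℝ := 1 + B with hMdef
  have hM : M.PosDef := Matrix.PosDef.add_posSemidef Matrix.PosDef.one hB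
  have hM1 : (M - 1).PosSemidef := by simpa [hMdef] using hB
  have hdM : 0 < M.det := hM.det_pos
  have hdMu : IsUnit M.det := isUnit_iff_ne_zero.mpr (ne_of_gt hdM)
  have hMinv : M * M⁻¹ = 1 := Matrix.mul_nonsing_inv M hdMu
  set R := CFC.sqrt C with hRdef
  have hR2 : R * R = C := CFC.sqrt_mul_sqrt_self C hC.nonneg
  have hRH : R.IsHermitian := (CFC.sqrt_nonneg C).posSemidef.1
  have hfact : M + C = M * (1 + M⁻¹ * C) := by
    rw [mul_add, mul_one, ← mul_assoc, hMinv, one_mul]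
  have hdet1 : (M + C).det = M.det * (1 + M⁻¹ * C).det := by
    rw [hfact, Matrix.det_mul]
  have hdet2 : (1 + M⁻¹ * C).det = (1 + R * M⁻¹ * R).det := by
    rw [← hR2, ← mul_assoc, Matrix.det_one_add_mul_comm, ← mul_assoc R M⁻¹ R]
  have hQ : (R * M⁻¹ * R).PosSemidef := by
    have := hM.posSemidef.inv.mul_mul_conjTranspose_same R
    rwa [hRH.eq] at this
  have hQ1 : (1 + R * M⁻¹ * R).PosDef :=
    Matrix.PosDef.add_posSemidef Matrix.PosDef.one hQ
  have hdom : ((1 + C) - (1 + R * M⁻¹ * R)).PosSemidef := by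
    have h1 : ((1 : Matrix (Fin n) (Fin n) ℝ) - M⁻¹).PosSemidef := aux_one_sub_inv hM hM1
    have h2 := h1.mul_mul_conjTranspose_same R
    rw [hRH.eq] at h2
    have h3 : R * (1 - M⁻¹) * R = (1 + C) - (1 + R * M⁻¹ * R) := by
      rw [mul_sub, sub_mul, mul_one, hR2]
      abel
    rwa [h3] at h2
  have hle : (1 + R * M⁻¹ * R).det ≤ (1 + C).det := aux_det_le_det hQ1 hdom
  calc (1 + B + C).det = M.det * (1 + R * M⁻¹ * R).det := by
        rw [← hdet2, ← hdet1, hMdef]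
    _ ≤ M.det * (1 + C).det := mul_le_mul_of_nonneg_left hle hdM.le
    _ = (1 + B).det * (1 + C).det := by rw [hMdef]

end aux

theorem stmt_7 {n : ℕ} (A B : Matrix (Fin n) (Fin n) ℝ)
    (hA : A.PosSemidef) (hB : B.PosSemidef) (hAB : (A - B).PosSemidef) :
    0 ≤ Real.log (1 + A).det - Real.log (1 + B).det ∧
    Real.log (1 + A).det - Real.log (1 + B).det ≤ Real.log (1 + (A - B)).det := by
  have hA1 : (1 + A).PosDef := Matrix.PosDef.add_posSemidef Matrix.PosDef.one hA
  have hB1 : (1 + B).PosDef := Matrix.PosDef.add_posSemidef Matrix.PosDef.one hB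
  have hC1 : (1 + (A - B)).PosDef := Matrix.PosDef.add_posSemidef Matrix.PosDef.one hAB
  have hdA : 0 < (1 + A).det := hA1.det_pos
  have hdB : 0 < (1 + B).det := hB1.det_pos
  have hdC : 0 < (1 + (A - B)).det := hC1.det_pos
  constructor
  · have hle : (1 + B).det ≤ (1 + A).det := by
      refine aux_det_le_det hB1 ?_
      have h : (1 + A) - (1 + B) = A - B := by abel
      rw [h]; exact hAB
    have := Real.log_le_log hdB hle
    linarith
  · have hsplit : (1 + A : Matrix (Fin n) (Fin n) ℝ) = 1 + B + (A - B) := by abel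
    have hle : (1 + A).det ≤ (1 + B).det * (1 + (A - B)).det := by
      rw [hsplit]
      exact aux_det_subadd hB hAB
    have hlog := Real.log_le_log hdA hle
    rw [Real.log_mul (ne_of_gt hdB) (ne_of_gt hdC)] at hlog
    linarith
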